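/- Let T be a non-degenerate triangle in ℝ². Then the odd compression ratio of T is at least ½: for every finite odd-cardinality set Z ⊆ ℝ², the Lebesgue measure of the set of points lying in an odd number of the translates T+z, z ∈ Z, is at least half the area of T. -/

import Mathlib

open scoped Classical
open MeasureTheory

noncomputable section

namespace TriOddAux

open Set

def T0 : Set (ℝ × ℝ) := {w : ℝ × ℝ | 0 ≤ w.1 ∧ 0 ≤ w.2 ∧ w.1 + w.2 ≤ 1}

def iota (l : ℤ × ℤ) : ℝ × ℝ := ((l.1 : ℝ)/2, (l.2 : ℝ)/2)

def F (w : ℝ × ℝ) : Finset (ℤ × ℤ) :=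
  if ⌊2 - 2*(w.1+w.2)⌋ = -⌊2*w.1⌋ + -⌊2*w.2⌋ then {(-⌊2*w.1⌋, -⌊2*w.2⌋)}
  else {(-⌊2*w.1⌋, -⌊2*w.2⌋), (-⌊2*w.1⌋ + 1, -⌊2*w.2⌋), (-⌊2*w.1⌋, -⌊2*w.2⌋ + 1)}

lemma odd_card_F (w : ℝ × ℝ) : Odd (F w).card := by
  unfold F
  split_ifs
  · simp
  · rw [Finset.card_insert_of_notMem (by simp [Prod.ext_iff]),
      Finset.card_insert_of_notMem (by simp [Prod.ext_iff])]
    simp [Finset.card_singleton]; decide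

lemma mem_F_iff {w : ℝ × ℝ} (hw : ∀ k : ℤ, 2*(w.1+w.2) ≠ (k : ℝ)) (i j : ℤ) :
    (i, j) ∈ F w ↔ (0 ≤ w.1 + (i:ℝ)/2 ∧ 0 ≤ w.2 + (j:ℝ)/2 ∧ (w.1 + (i:ℝ)/2) + (w.2 + (j:ℝ)/2) ≤ 1) := by
  set m : ℤ := -⌊2*w.1⌋ with hm
  set n : ℤ := -⌊2*w.2⌋ with hn
  set s : ℤ := ⌊2 - 2*(w.1+w.2)⌋ with hs
  have h1 : (0 ≤ w.1 + (i:ℝ)/2) ↔ m ≤ i := by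
    rw [hm, neg_le]
    rw [show (0 ≤ w.1 + (i:ℝ)/2) ↔ ((-i : ℤ) : ℝ) ≤ 2*w.1 by push_cast; constructor <;> intro <;> linarith]
    exact Int.le_floor.symm
  have h2 : (0 ≤ w.2 + (j:ℝ)/2) ↔ n ≤ j := by
    rw [hn, neg_le]
    rw [show (0 ≤ w.2 + (j:ℝ)/2) ↔ ((-j : ℤ) : ℝ) ≤ 2*w.2 by push_cast; constructor <;> intro <;> linarith]
    exact Int.le_floor.symm
  have h3 : ((w.1 + (i:ℝ)/2) + (w.2 + (j:ℝ)/2) ≤ 1) ↔ i + j ≤ s := by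
    rw [hs, Int.le_floor]
    push_cast
    constructor <;> intro <;> linarith
  have hlow : m + n ≤ s := by
    rw [hs, Int.le_floor, hm, hn]
    push_cast
    have := Int.lt_floor_add_one (2*w.1)
    have := Int.lt_floor_add_one (2*w.2)
    linarith
  have hhigh : s ≤ m + n + 1 := by
    by_contra hcon
    push_neg at hcon
    have hsle : (s : ℝ) ≤ 2 - 2*(w.1+w.2) := Int.floor_le _
    have hA : ((⌊2*w.1⌋ : ℤ) : ℝ) ≤ 2*w.1 := Int.floor_le _
    have hB : ((⌊2*w.2⌋ : ℤ) : ℝ) ≤ 2*w.2 := Int.floor_le _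
    have hstep : m + n + 2 ≤ s := by
      rw [show m + n + 2 = (m + n + 1) + 1 by ring]
      exact Int.add_one_le_iff.mpr hcon
    have hcon' : ((m + n + 2 : ℤ) : ℝ) ≤ (s : ℝ) := Int.cast_le.mpr hstep
    have heq : 2*(w.1 + w.2) = ((⌊2*w.1⌋ + ⌊2*w.2⌋ : ℤ) : ℝ) := by
      rw [hm, hn] at hcon'
      push_cast at hcon' ⊢
      linarith
    exact hw _ heq
  rw [h1, h2, h3]
  unfold F
  rw [← hm, ← hn, ← hs]
  split_ifs with hd
  · simp only [Finset.mem_singleton, Prod.ext_iff]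
    omega
  · simp only [Finset.mem_insert, Finset.mem_singleton, Prod.ext_iff]
    omega

lemma odd_sum_of_odd {α : Type*} (s : Finset α) (f : α → ℕ)
    (h : ∀ x ∈ s, Odd (f x)) (hs : Odd s.card) : Odd (∑ x ∈ s, f x) := by
  rw [Nat.odd_iff] at hs ⊢
  rw [Finset.sum_nat_mod]
  have : ∑ x ∈ s, f x % 2 = ∑ x ∈ s, 1 := Finset.sum_congr rfl (fun x hx => Nat.odd_iff.mp (h x hx))
  rw [this, Finset.sum_const, smul_eq_mul, mul_one, hs]

lemma exists_odd_of_odd_sum {α : Type*} (s : Finset α) (f : α → ℕ)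
    (h : Odd (∑ x ∈ s, f x)) : ∃ x ∈ s, Odd (f x) := by
  by_contra hcon
  push_neg at hcon
  rw [Nat.odd_iff, Finset.sum_nat_mod] at h
  have : ∑ x ∈ s, f x % 2 = ∑ x ∈ s, 0 := Finset.sum_congr rfl (fun x hx => by
    have := hcon x hx
    rw [Nat.odd_iff] at this
    omega)
  rw [this] at h
  simp at h

variable (Z' : Finset (ℝ × ℝ))

def cnt (r : ℝ × ℝ) : ℕ := (Z'.filter (fun z => r - z ∈ T0)).card

lemma exists_odd_translate (hZ : Odd Z'.card) (q : ℝ × ℝ)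
    (hq : ∀ z ∈ Z', ∀ k : ℤ, 2*((q.1 - z.1) + (q.2 - z.2)) ≠ (k : ℝ)) :
    ∃ l : ℤ × ℤ, Odd (cnt Z' (q + iota l)) := by
  classical
  set B := Z'.biUnion (fun z => F (q - z)) with hB
  have hmem : ∀ z ∈ Z', ∀ l : ℤ × ℤ, (l ∈ F (q - z)) ↔ q + iota l - z ∈ T0 := by
    intro z hz l
    have hgen : ∀ k : ℤ, 2*((q - z).1+(q - z).2) ≠ (k : ℝ) := by
      intro k
      simpa using hq z hz k
    rcases l with ⟨i, j⟩
    rw [mem_F_iff hgen i j]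
    simp only [T0, iota, Set.mem_setOf_eq, Prod.fst_add, Prod.snd_add, Prod.fst_sub, Prod.snd_sub]
    constructor
    · rintro ⟨a, b, c⟩
      refine ⟨by linarith, by linarith, by linarith⟩
    · rintro ⟨a, b, c⟩
      refine ⟨by linarith, by linarith, by linarith⟩
  have key : ∀ z ∈ Z', B.filter (fun l => q + iota l - z ∈ T0) = F (q - z) := by
    intro z hz
    ext l
    simp only [Finset.mem_filter, hB, Finset.mem_biUnion]
    constructor
    · rintro ⟨-, h2⟩
      exact (hmem z hz l).mpr h2
    · intro h
      exact ⟨⟨z, hz, h⟩, (hmem z hz l).mp h⟩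
  have sum1 : ∑ l ∈ B, cnt Z' (q + iota l) = ∑ z ∈ Z', (F (q - z)).card := by
    unfold cnt
    simp only [Finset.card_filter]
    rw [Finset.sum_comm]
    refine Finset.sum_congr rfl (fun z hz => ?_)
    rw [← Finset.card_filter]
    rw [key z hz]
  have hodd : Odd (∑ l ∈ B, cnt Z' (q + iota l)) := by
    rw [sum1]
    exact odd_sum_of_odd _ _ (fun z _ => odd_card_F _) hZ
  obtain ⟨l, -, hl⟩ := exists_odd_of_odd_sum _ _ hodd
  exact ⟨l, hl⟩

lemma measurableSet_T0 : MeasurableSet T0 := by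
  have h1 : IsClosed {w : ℝ × ℝ | 0 ≤ w.1} := isClosed_le continuous_const continuous_fst
  have h2 : IsClosed {w : ℝ × ℝ | 0 ≤ w.2} := isClosed_le continuous_const continuous_snd
  have h3 : IsClosed {w : ℝ × ℝ | w.1 + w.2 ≤ 1} :=
    isClosed_le (continuous_fst.add continuous_snd) continuous_const
  have : T0 = ({w : ℝ × ℝ | 0 ≤ w.1} ∩ {w : ℝ × ℝ | 0 ≤ w.2}) ∩ {w : ℝ × ℝ | w.1 + w.2 ≤ 1} := by
    ext w; simp [T0]; tauto
  rw [this]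
  exact (((h1.inter h2).inter h3)).measurableSet

lemma measurable_cnt : Measurable (cnt Z') := by
  have : cnt Z' = fun r => ∑ z ∈ Z', if r - z ∈ T0 then 1 else 0 := by
    funext r; exact Finset.card_filter _ _
  rw [this]
  refine Finset.measurable_sum _ (fun z _ => ?_)
  refine Measurable.ite ?_ measurable_const measurable_const
  have : {r : ℝ × ℝ | r - z ∈ T0} = (fun r => r - z) ⁻¹' T0 := rfl
  rw [this]
  exact (measurable_id.sub measurable_const) (measurableSet_T0)

lemma measurableSet_O' : MeasurableSet {q : ℝ × ℝ | Odd (cnt Z' q)} := by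
  have : {q : ℝ × ℝ | Odd (cnt Z' q)} = (cnt Z') ⁻¹' {n : ℕ | Odd n} := rfl
  rw [this]
  exact (measurable_cnt Z') (MeasurableSet.of_discrete)

lemma diag_null (r : ℝ) : volume {p : ℝ × ℝ | p.1 + p.2 = r} = 0 := by
  have hm : MeasurableSet {p : ℝ × ℝ | p.1 + p.2 = r} :=
    (isClosed_eq (continuous_fst.add continuous_snd) continuous_const).measurableSet
  rw [Measure.volume_eq_prod ℝ ℝ, Measure.prod_apply hm]
  have hs : ∀ x : ℝ, (Prod.mk x ⁻¹' {p : ℝ × ℝ | p.1 + p.2 = r}) = {r - x} := by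
    intro x; ext y
    simp only [Set.mem_preimage, Set.mem_setOf_eq, Set.mem_singleton_iff]
    constructor <;> intro h <;> linarith
  simp [hs]

def Bad : Set (ℝ × ℝ) := ⋃ z ∈ (Z' : Set (ℝ × ℝ)), ⋃ k : ℤ, {p : ℝ × ℝ | p.1 + p.2 = z.1 + z.2 + k/2}

lemma bad_null : volume (Bad Z') = 0 := by
  refine (measure_biUnion_null_iff Z'.countable_toSet).mpr (fun z _ => ?_)
  refine (measure_iUnion_null_iff).mpr (fun k => ?_)
  exact diag_null _

def box (l : ℤ × ℤ) : Set (ℝ × ℝ) :=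
  Ico ((l.1 : ℝ)/2) ((l.1 : ℝ)/2 + 1/2) ×ˢ Ico ((l.2 : ℝ)/2) ((l.2 : ℝ)/2 + 1/2)

lemma mem_box {p : ℝ × ℝ} {l : ℤ × ℤ} : p ∈ box l ↔ ⌊2*p.1⌋ = l.1 ∧ ⌊2*p.2⌋ = l.2 := by
  rcases l with ⟨i, j⟩
  simp only [box, Set.mem_prod, Set.mem_Ico]
  rw [Int.floor_eq_iff, Int.floor_eq_iff]
  constructor
  · rintro ⟨⟨a, b⟩, c, d⟩
    refine ⟨⟨by linarith, by linarith⟩, by linarith, by linarith⟩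
  · rintro ⟨⟨a, b⟩, c, d⟩
    refine ⟨⟨by linarith, by linarith⟩, by linarith, by linarith⟩

lemma box_cover : ⋃ l : ℤ × ℤ, box l = Set.univ := by
  ext p
  simp only [Set.mem_iUnion, Set.mem_univ, iff_true]
  exact ⟨(⌊2*p.1⌋, ⌊2*p.2⌋), mem_box.mpr ⟨rfl, rfl⟩⟩

lemma box_disj : Pairwise (Function.onFun Disjoint box) := by
  intro l l' hne
  rw [Function.onFun, Set.disjoint_left]
  intro p hp hp'
  rw [mem_box] at hp hp'
  exact hne (by rw [Prod.ext_iff]; omega)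

lemma volume_box (l : ℤ × ℤ) : volume (box l) = ENNReal.ofReal (1/4) := by
  rw [box, Measure.volume_eq_prod, Measure.prod_prod, Real.volume_Ico, Real.volume_Ico]
  rw [show ((l.1:ℝ)/2 + 1/2 - (l.1:ℝ)/2) = 1/2 by ring, show ((l.2:ℝ)/2 + 1/2 - (l.2:ℝ)/2) = 1/2 by ring]
  rw [← ENNReal.ofReal_mul (by norm_num)]
  norm_num

lemma box_preimage (l : ℤ × ℤ) : (fun r => r + iota l) ⁻¹' (box l) = box (0, 0) := by
  ext p
  simp only [Set.mem_preimage, mem_box, iota, Prod.fst_add, Prod.snd_add]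
  constructor
  · rintro ⟨h1, h2⟩
    constructor
    · have : 2*(p.1 + (l.1:ℝ)/2) = 2*p.1 + l.1 := by ring
      rw [this, Int.floor_add_intCast] at h1
      omega
    · have : 2*(p.2 + (l.2:ℝ)/2) = 2*p.2 + l.2 := by ring
      rw [this, Int.floor_add_intCast] at h2
      omega
  · rintro ⟨h1, h2⟩
    constructor
    · have : 2*(p.1 + (l.1:ℝ)/2) = 2*p.1 + l.1 := by ring
      rw [this, Int.floor_add_intCast]
      omega
    · have : 2*(p.2 + (l.2:ℝ)/2) = 2*p.2 + l.2 := by ring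
      rw [this, Int.floor_add_intCast]
      omega



theorem std_bound (hZ : Odd Z'.card) :
    ENNReal.ofReal (1/4) ≤ volume {q : ℝ × ℝ | Odd (cnt Z' q)} := by
  set O' := {q : ℝ × ℝ | Odd (cnt Z' q)} with hO'def
  have hO' : MeasurableSet O' := measurableSet_O' Z'
  have hboxm : ∀ l : ℤ × ℤ, MeasurableSet (box l) := fun l =>
    measurableSet_Ico.prod measurableSet_Ico
  have hsub : box (0,0) ⊆ (⋃ l : ℤ × ℤ, (fun r => r + iota l) ⁻¹' (O' ∩ box l)) ∪ Bad Z' := by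
    intro q hq0
    by_cases hb : q ∈ Bad Z'
    · exact Or.inr hb
    · refine Or.inl ?_
      have hgen : ∀ z ∈ Z', ∀ k : ℤ, 2*((q.1 - z.1) + (q.2 - z.2)) ≠ (k : ℝ) := by
        intro z hz k hk
        apply hb
        refine Set.mem_biUnion hz (Set.mem_iUnion.mpr ⟨k, ?_⟩)
        simp only [Set.mem_setOf_eq]
        linarith
      obtain ⟨l, hl⟩ := exists_odd_translate Z' hZ q hgen
      refine Set.mem_iUnion.mpr ⟨l, Set.mem_preimage.mpr ⟨hl, ?_⟩⟩
      have := box_preimage l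
      rw [← this] at hq0
      exact hq0
  have step1 : ENNReal.ofReal (1/4) ≤
      volume (⋃ l : ℤ × ℤ, (fun r => r + iota l) ⁻¹' (O' ∩ box l)) := by
    calc ENNReal.ofReal (1/4) = volume (box (0,0)) := (volume_box _).symm
    _ ≤ volume ((⋃ l : ℤ × ℤ, (fun r => r + iota l) ⁻¹' (O' ∩ box l)) ∪ Bad Z') :=
        measure_mono hsub
    _ ≤ volume (⋃ l : ℤ × ℤ, (fun r => r + iota l) ⁻¹' (O' ∩ box l)) + volume (Bad Z') :=
        measure_union_le _ _
    _ = volume (⋃ l : ℤ × ℤ, (fun r => r + iota l) ⁻¹' (O' ∩ box l)) := by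
        rw [bad_null, add_zero]
  have step2 : volume (⋃ l : ℤ × ℤ, (fun r => r + iota l) ⁻¹' (O' ∩ box l)) ≤
      ∑' l : ℤ × ℤ, volume (O' ∩ box l) := by
    refine le_trans (measure_iUnion_le _) ?_
    refine ENNReal.tsum_le_tsum (fun l => ?_)
    exact le_of_eq (measure_preimage_add_right volume (iota l) _)
  have step3 : ∑' l : ℤ × ℤ, volume (O' ∩ box l) = volume O' := by
    rw [← measure_iUnion (fun l l' hne => ((box_disj hne).mono
        Set.inter_subset_right Set.inter_subset_right))
        (fun l => hO'.inter (hboxm l))]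
    rw [← Set.inter_iUnion, box_cover, Set.inter_univ]
  exact step1.trans (step2.trans_eq step3)

lemma convex_T0 : Convex ℝ T0 := by
  intro x hx y hy s t hs ht hst
  obtain ⟨x1, x2, x3⟩ := hx
  obtain ⟨y1, y2, y3⟩ := hy
  refine ⟨?_, ?_, ?_⟩ <;>
    simp only [Prod.fst_add, Prod.snd_add, Prod.smul_fst, Prod.smul_snd, smul_eq_mul] <;>
    nlinarith

lemma stdhull : convexHull ℝ ({((0:ℝ),(0:ℝ)), ((1:ℝ),(0:ℝ)), ((0:ℝ),(1:ℝ))} : Set (ℝ × ℝ)) = T0 := by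
  apply Set.Subset.antisymm
  · apply convexHull_min _ convex_T0
    intro w hw
    simp only [Set.mem_insert_iff, Set.mem_singleton_iff] at hw
    rcases hw with rfl | rfl | rfl <;> norm_num [T0]
  · intro w hw
    obtain ⟨h1, h2, h3⟩ := hw
    rw [convexHull_insert (by exact ⟨((1:ℝ),(0:ℝ)), by simp⟩), convexHull_pair]
    rw [mem_convexJoin]
    refine ⟨((0:ℝ),(0:ℝ)), Set.mem_singleton _, ?_⟩
    by_cases hs0 : w.1 + w.2 = 0
    · have hw1 : w.1 = 0 := by linarith
      have hw2 : w.2 = 0 := by linarith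
      refine ⟨((1:ℝ),(0:ℝ)), left_mem_segment ℝ _ _, ?_⟩
      have : w = ((0:ℝ),(0:ℝ)) := Prod.ext hw1 hw2
      rw [this]
      exact left_mem_segment ℝ _ _
    · have hspos : 0 < w.1 + w.2 := lt_of_le_of_ne (by linarith) (Ne.symm hs0)
      refine ⟨(w.1/(w.1+w.2), w.2/(w.1+w.2)), ?_, ?_⟩
      · refine ⟨w.1/(w.1+w.2), w.2/(w.1+w.2), div_nonneg h1 hspos.le, div_nonneg h2 hspos.le,
          by field_simp, ?_⟩
        rw [Prod.ext_iff]
        constructor <;> simp [Prod.smul_fst, Prod.smul_snd]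
      · refine ⟨1 - (w.1+w.2), w.1+w.2, by linarith, by linarith, by ring, ?_⟩
        rw [Prod.ext_iff]
        constructor <;>
          simp only [Prod.fst_add, Prod.snd_add, Prod.smul_fst, Prod.smul_snd, smul_eq_mul] <;>
          field_simp <;> ring
lemma measurableSet_R : MeasurableSet {w : ℝ × ℝ | w.1 ≤ 1 ∧ w.2 ≤ 1 ∧ 1 ≤ w.1 + w.2} := by
  have h1 : IsClosed {w : ℝ × ℝ | w.1 ≤ 1} := isClosed_le continuous_fst continuous_const
  have h2 : IsClosed {w : ℝ × ℝ | w.2 ≤ 1} := isClosed_le continuous_snd continuous_const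
  have h3 : IsClosed {w : ℝ × ℝ | 1 ≤ w.1 + w.2} :=
    isClosed_le continuous_const (continuous_fst.add continuous_snd)
  have : {w : ℝ × ℝ | w.1 ≤ 1 ∧ w.2 ≤ 1 ∧ 1 ≤ w.1 + w.2} =
      ({w : ℝ × ℝ | w.1 ≤ 1} ∩ {w : ℝ × ℝ | w.2 ≤ 1}) ∩ {w : ℝ × ℝ | 1 ≤ w.1 + w.2} := by
    ext w; simp; tauto
  rw [this]
  exact ((h1.inter h2).inter h3).measurableSet

lemma volume_T0_le : volume T0 ≤ ENNReal.ofReal (1/2) := by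
  set R : Set (ℝ × ℝ) := {w : ℝ × ℝ | w.1 ≤ 1 ∧ w.2 ≤ 1 ∧ 1 ≤ w.1 + w.2} with hRdef
  have hRvol : volume R = volume T0 := by
    have hRpre : R = Neg.neg ⁻¹' ((fun w : ℝ × ℝ => w + ((1:ℝ),(1:ℝ))) ⁻¹' T0) := by
      ext w
      simp only [hRdef, Set.mem_preimage, Set.mem_setOf_eq, T0, Prod.fst_add, Prod.snd_add,
        Prod.fst_neg, Prod.snd_neg]
      constructor
      · rintro ⟨a, b, c⟩; exact ⟨by linarith, by linarith, by linarith⟩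
      · rintro ⟨a, b, c⟩; exact ⟨by linarith, by linarith, by linarith⟩
    rw [hRpre, Measure.measure_preimage_neg, measure_preimage_add_right]
  have hsq : volume (T0 ∪ R) ≤ 1 := by
    have hsub : T0 ∪ R ⊆ Set.Icc (0:ℝ) 1 ×ˢ Set.Icc (0:ℝ) 1 := by
      rintro w (⟨a, b, c⟩ | ⟨a, b, c⟩) <;>
        refine ⟨⟨by linarith, by linarith⟩, by linarith, by linarith⟩
    calc volume (T0 ∪ R) ≤ volume (Set.Icc (0:ℝ) 1 ×ˢ Set.Icc (0:ℝ) 1) := measure_mono hsub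
    _ = 1 := by
        rw [Measure.volume_eq_prod ℝ ℝ, Measure.prod_prod, Real.volume_Icc]
        norm_num
  have hint : volume (T0 ∩ R) = 0 := by
    refine measure_mono_null ?_ (diag_null 1)
    rintro w ⟨⟨-, -, c⟩, -, -, f⟩
    exact le_antisymm c f
  have hkey := measure_union_add_inter (μ := volume) T0 measurableSet_R
  rw [hint, add_zero, hRvol] at hkey
  have h2 : volume T0 + volume T0 ≤ 1 := hkey ▸ hsq
  by_contra hcon
  push_neg at hcon
  have : (1 : ENNReal) < volume T0 + volume T0 := by
    calc (1 : ENNReal) = ENNReal.ofReal (1/2) + ENNReal.ofReal (1/2) := by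
          rw [← ENNReal.ofReal_add (by norm_num) (by norm_num)]; norm_num
    _ < volume T0 + volume T0 := ENNReal.add_lt_add hcon hcon
  exact absurd h2 (not_le.mpr this)

end TriOddAux

open TriOddAux in
theorem triangle_odd_compression_half (a b c : ℝ × ℝ)
    (hnd : ¬ Collinear ℝ ({a, b, c} : Set (ℝ × ℝ)))
    (Z : Finset (ℝ × ℝ)) (hZ : Odd Z.card) :
    volume (convexHull ℝ ({a, b, c} : Set (ℝ × ℝ))) / 2 ≤
      volume {p : ℝ × ℝ |
        Odd ((Z.filter (fun z => p - z ∈ convexHull ℝ ({a, b, c} : Set (ℝ × ℝ)))).card)} := by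
  classical
  set u : ℝ × ℝ := b - a with hu
  set v : ℝ × ℝ := c - a with hv
  set L : (ℝ × ℝ) →ₗ[ℝ] (ℝ × ℝ) :=
    (LinearMap.fst ℝ ℝ ℝ).smulRight u + (LinearMap.snd ℝ ℝ ℝ).smulRight v with hLdef
  have hLapp : ∀ w : ℝ × ℝ, L w = w.1 • u + w.2 • v := fun w => rfl
  have hker : ∀ w : ℝ × ℝ, L w = 0 → w = 0 := by
    intro w hw
    rw [hLapp] at hw
    by_contra hne
    apply hnd
    by_cases hy : w.2 = 0
    · have hx : w.1 ≠ 0 := fun hx => hne (Prod.ext hx hy)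
      rw [hy, zero_smul, add_zero] at hw
      have hu0 : u = 0 := by
        rcases smul_eq_zero.mp hw with h | h
        · exact absurd h hx
        · exact h
      have hba : b = a := by
        rw [hu] at hu0
        exact sub_eq_zero.mp hu0
      rw [hba, Set.insert_idem]
      exact collinear_pair ℝ a c
    · have h2 : w.2 • v = -(w.1 • u) := eq_neg_of_add_eq_zero_right hw
      have hv' : v = (-(w.1)/w.2) • u := by
        calc v = (w.2)⁻¹ • (w.2 • v) := (inv_smul_smul₀ hy v).symm
        _ = (w.2)⁻¹ • (-(w.1 • u)) := by rw [h2]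
        _ = (-(w.1)/w.2) • u := by
            rw [smul_neg, ← neg_smul, smul_smul]
            congr 1
            field_simp
      rw [collinear_iff_of_mem (Set.mem_insert a ({b, c} : Set (ℝ × ℝ)))]
      refine ⟨u, fun p hp => ?_⟩
      simp only [Set.mem_insert_iff, Set.mem_singleton_iff] at hp
      rcases hp with rfl | rfl | rfl
      · exact ⟨0, by simp⟩
      · refine ⟨1, ?_⟩
        simp only [one_smul, vadd_eq_add, hu]
        abel
      · refine ⟨-(w.1)/w.2, ?_⟩
        rw [← hv']
        simp only [vadd_eq_add, hv]
        abel
  have hinj : Function.Injective L := by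
    intro x y h
    have hxy : L (x - y) = 0 := by rw [map_sub, h, sub_self]
    have := hker _ hxy
    exact sub_eq_zero.mp this
  have hsurj : Function.Surjective L := (LinearMap.injective_iff_surjective).mp hinj
  let eL : (ℝ × ℝ) ≃ₗ[ℝ] (ℝ × ℝ) := LinearEquiv.ofBijective L ⟨hinj, hsurj⟩
  have heL : ∀ w, eL w = L w := fun w => rfl
  have heLsymm : ∀ w, L (eL.symm w) = w := fun w => (heL _).symm.trans (eL.apply_symm_apply w)
  let f : (ℝ × ℝ) →ᵃ[ℝ] (ℝ × ℝ) := AffineMap.mk' (fun w => L w + a) L 0 (by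
    intro p'
    show L p' + a = L (p' - 0) + (L 0 + a)
    rw [sub_zero, map_zero, zero_add])
  have hf : ∀ w, f w = L w + a := fun w => rfl
  have hTri : ({a, b, c} : Set (ℝ × ℝ)) =
      f '' {((0:ℝ),(0:ℝ)), ((1:ℝ),(0:ℝ)), ((0:ℝ),(1:ℝ))} := by
    rw [Set.image_insert_eq, Set.image_insert_eq, Set.image_singleton]
    have e0 : f ((0:ℝ),(0:ℝ)) = a := by
      rw [hf, hLapp]
      simp
    have e1 : f ((1:ℝ),(0:ℝ)) = b := by
      rw [hf, hLapp]
      simp only [one_smul, zero_smul, add_zero, hu]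
      abel
    have e2 : f ((0:ℝ),(1:ℝ)) = c := by
      rw [hf, hLapp]
      simp only [one_smul, zero_smul, zero_add, hv]
      abel
    rw [e0, e1, e2]
  have hhull : convexHull ℝ ({a, b, c} : Set (ℝ × ℝ)) = f '' T0 := by
    rw [hTri, ← AffineMap.image_convexHull, stdhull]
  have hmemiff : ∀ p z : ℝ × ℝ,
      (p - z ∈ convexHull ℝ ({a, b, c} : Set (ℝ × ℝ))) ↔
        (eL.symm p - eL.symm (z + a) ∈ T0) := by
    intro p z
    rw [hhull]
    constructor
    · rintro ⟨w, hw, hwe⟩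
      rw [hf] at hwe
      have hLw : L w = p - z - a := by rw [← hwe]; abel
      have hw' : w = eL.symm (p - z - a) := by
        have h1 : eL.symm (L w) = eL.symm (p - z - a) := by rw [hLw]
        rwa [show eL.symm (L w) = w from eL.symm_apply_apply w] at h1
      have : eL.symm p - eL.symm (z + a) = w := by
        rw [hw', map_sub, map_sub, map_add]
        abel
      rwa [this]
    · intro hT
      refine ⟨eL.symm p - eL.symm (z + a), hT, ?_⟩
      rw [hf, map_sub, heLsymm, heLsymm]
      abel
  set ζ : (ℝ × ℝ) → (ℝ × ℝ) := fun z => eL.symm (z + a) with hζ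
  have hζinj : Function.Injective ζ := by
    intro x y h
    have := eL.symm.injective h
    exact add_right_cancel this
  set Z' : Finset (ℝ × ℝ) := Z.image ζ with hZ'def
  have hZ'odd : Odd Z'.card := by
    rwa [hZ'def, Finset.card_image_of_injective _ hζinj]
  have hfilter : ∀ p : ℝ × ℝ,
      (Z.filter (fun z => p - z ∈ convexHull ℝ ({a, b, c} : Set (ℝ × ℝ)))).card
        = cnt Z' (eL.symm p) := by
    intro p
    show _ = (Z'.filter (fun z => eL.symm p - z ∈ T0)).card
    rw [hZ'def, Finset.filter_image, Finset.card_image_of_injective _ hζinj]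
    congr 1
    exact Finset.filter_congr (fun z _ => hmemiff p z)
  have hOset : {p : ℝ × ℝ |
      Odd ((Z.filter (fun z => p - z ∈ convexHull ℝ ({a, b, c} : Set (ℝ × ℝ)))).card)}
        = ⇑L '' {q : ℝ × ℝ | Odd (cnt Z' q)} := by
    ext p
    simp only [Set.mem_setOf_eq, Set.mem_image]
    rw [hfilter p]
    constructor
    · intro h
      exact ⟨eL.symm p, h, heLsymm p⟩
    · rintro ⟨q, hq, rfl⟩
      rwa [show eL.symm (L q) = q from eL.symm_apply_apply q]
  rw [hOset, hhull]
  have himg2 : ⇑f '' T0 = (fun w => w + a) '' (⇑L '' T0) := by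
    rw [Set.image_image]
    exact Set.image_congr' hf
  rw [himg2, Set.image_add_right, measure_preimage_add_right,
    Measure.addHaar_image_linearMap, Measure.addHaar_image_linearMap, mul_div_assoc]
  refine mul_le_mul_right ?_ _
  calc volume T0 / 2 ≤ ENNReal.ofReal (1/2) / 2 := ENNReal.div_le_div_right volume_T0_le 2
  _ = ENNReal.ofReal (1/4) := by
      rw [show (2:ENNReal) = ENNReal.ofReal 2 by norm_num,
        ← ENNReal.ofReal_div_of_pos (by norm_num)]
      norm_num
  _ ≤ volume {q : ℝ × ℝ | Odd (cnt Z' q)} := std_bound Z' hZ'odd
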